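/- Let u, v : ℝ²∖{0} → ℂ be square-integrable K-real functions (Ku = u and Kv = v pointwise). Then ⟨Σ₁^c u, v⟩ = ⟨u, Σ₁^c v⟩ for the L² inner product ⟨f, g⟩ = ∫ f conj(g); in particular the restriction of (1/2)(I + Σ₁^c) to the real Hilbert space L²_K is an orthogonal projector. -/

import Mathlib

open MeasureTheory

noncomputable section

/-- The antilinear operator `K`: `(Ku)(x,y) = ((x+iy)/|x+iy|) · conj(u(x,y))`,
i.e. `Ku = e^{iθ} ū` in polar coordinates. -/
def Kop (u : ℝ × ℝ → ℂ) : ℝ × ℝ → ℂ :=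
  fun p => ((p.1 + p.2 * Complex.I) / (‖p.1 + p.2 * Complex.I‖ : ℂ))
    * (starRingEnd ℂ) (u p)

/-- The antilinear symmetry `Σ₁^c = iΓΣ₁`: `(Σ₁^c u)(x,y) = i·conj(u(−x,y))`. -/
def Sigma1c (u : ℝ × ℝ → ℂ) : ℝ × ℝ → ℂ :=
  fun p => Complex.I * (starRingEnd ℂ) (u (-p.1, p.2))

/-- For square-integrable K-real functions `u, v`, one has
`⟨Σ₁^c u, v⟩ = ⟨u, Σ₁^c v⟩` for the `L²` inner product `⟨f,g⟩ = ∫ f conj(g)`;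
in particular the restriction of `(1/2)(I + Σ₁^c)` to the real Hilbert space
`L²_K` is an orthogonal projector. -/
theorem Sigma1c_symmetric_on_L2K (u v : ℝ × ℝ → ℂ)
    (hu : MemLp u 2 (volume : Measure (ℝ × ℝ)))
    (hv : MemLp v 2 (volume : Measure (ℝ × ℝ)))
    (hKu : ∀ p : ℝ × ℝ, p ≠ 0 → Kop u p = u p)
    (hKv : ∀ p : ℝ × ℝ, p ≠ 0 → Kop v p = v p) :
    (∫ p : ℝ × ℝ, Sigma1c u p * (starRingEnd ℂ) (v p))
      = ∫ p : ℝ × ℝ, u p * (starRingEnd ℂ) (Sigma1c v p) := by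
  set φ : ℝ × ℝ → ℝ × ℝ := fun p => (-p.1, p.2) with hφdef
  have hφ : MeasurePreserving φ volume volume := by
    have h := (Measure.measurePreserving_neg (volume : Measure ℝ)).prod
      (MeasurePreserving.id (volume : Measure ℝ))
    rw [← Measure.volume_eq_prod] at h
    exact h
  have he : MeasurableEmbedding φ := by
    have := ((MeasurableEquiv.neg ℝ).prodCongr (MeasurableEquiv.refl ℝ)).measurableEmbedding
    convert this using 1
    rfl
  have step1 : (∫ p : ℝ × ℝ, Sigma1c u p * (starRingEnd ℂ) (v p))
      = ∫ p : ℝ × ℝ, Complex.I * (starRingEnd ℂ) (u p) * (starRingEnd ℂ) (v (φ p)) := by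
    rw [← hφ.integral_comp he (fun p => Sigma1c u p * (starRingEnd ℂ) (v p))]
    congr 1
    funext p
    simp [Sigma1c, hφdef]
  rw [step1]
  apply integral_congr_ae
  have hne : ∀ᵐ p : ℝ × ℝ, p ≠ 0 := by
    rw [ae_iff]
    simpa using measure_singleton (0 : ℝ × ℝ)
  filter_upwards [hne] with p hp
  -- pointwise computation
  set z : ℂ := (p.1 : ℂ) + (p.2 : ℂ) * Complex.I with hz
  have hzne : z ≠ 0 := by
    intro h
    apply hp
    have h1 : z.re = 0 := by rw [h]; simp
    have h2 : z.im = 0 := by rw [h]; simp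
    simp [hz, Complex.add_re, Complex.add_im, Complex.mul_re, Complex.mul_im] at h1 h2
    exact Prod.ext h1 h2
  have hφp : φ p ≠ 0 := by
    intro h
    apply hp
    have := Prod.ext_iff.mp h
    exact Prod.ext (by simpa [hφdef] using this.1) this.2
  have hane : (‖z‖ : ℂ) ≠ 0 := by
    simpa using hzne
  -- conj versions of K-reality
  have hu' : (starRingEnd ℂ) (z / (‖z‖ : ℂ)) * u p = (starRingEnd ℂ) (u p) := by
    have := congrArg (starRingEnd ℂ) (hKu p hp)
    simpa [Kop, hz, mul_comm] using this
  have hv' : (starRingEnd ℂ) ((-(starRingEnd ℂ) z) / (‖z‖ : ℂ)) * v (φ p)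
      = (starRingEnd ℂ) (v (φ p)) := by
    have := congrArg (starRingEnd ℂ) (hKv (φ p) hφp)
    have habs : ‖((-p.1 : ℝ) + (p.2 : ℝ) * Complex.I)‖ = ‖z‖ := by
      have : ((-p.1 : ℝ) + (p.2 : ℝ) * Complex.I) = -(starRingEnd ℂ) z := by
        simp [hz, Complex.ext_iff]
      rw [this]
      simp
    simp only [Kop, hφdef] at this
    rw [habs] at this
    have hrw : ((-p.1 : ℝ) : ℂ) + (p.2 : ℝ) * Complex.I = -(starRingEnd ℂ) z := by
      simp [hz, Complex.ext_iff]
    rw [hrw] at this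
    simpa [mul_comm] using this
  have key : (starRingEnd ℂ) (z / (‖z‖ : ℂ))
      * (starRingEnd ℂ) ((-(starRingEnd ℂ) z) / (‖z‖ : ℂ)) = -1 := by
    rw [← map_mul]
    have : z / (‖z‖ : ℂ) * ((-(starRingEnd ℂ) z) / (‖z‖ : ℂ))
        = -((z * (starRingEnd ℂ) z) / ((‖z‖ : ℂ) * (‖z‖ : ℂ))) := by
      ring
    rw [this, Complex.mul_conj]
    rw [← Complex.ofReal_mul, ← sq, Complex.sq_norm]
    rw [div_self (by simpa [Complex.normSq_eq_zero] using hzne : (Complex.normSq z : ℂ) ≠ 0)]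
    simp
  calc Complex.I * (starRingEnd ℂ) (u p) * (starRingEnd ℂ) (v (φ p))
      = Complex.I * ((starRingEnd ℂ) (z / (‖z‖ : ℂ)) * u p)
        * ((starRingEnd ℂ) ((-(starRingEnd ℂ) z) / (‖z‖ : ℂ)) * v (φ p)) := by
        rw [hu', hv']
    _ = Complex.I * ((starRingEnd ℂ) (z / (‖z‖ : ℂ))
        * (starRingEnd ℂ) ((-(starRingEnd ℂ) z) / (‖z‖ : ℂ))) * (u p * v (φ p)) := by ring
    _ = -Complex.I * (u p * v (φ p)) := by rw [key]; ring
    _ = u p * (starRingEnd ℂ) (Sigma1c v p) := by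
        simp [Sigma1c, hφdef]; ring

end
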